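/- Every substructure (subquasigroup) of a free Steiner quasigroup is itself a free Steiner quasigroup. -/
import Mathlib


/-- A Steiner quasigroup: a commutative, idempotent binary structure
with `x * (x * y) = y`. -/
class Steiner (M : Type) extends Mul M where
  comm : ∀ x y : M, x * y = y * x
  idem : ∀ x : M, x * x = x
  lcancel : ∀ x y : M, x * (x * y) = y

namespace Steiner

variable {M : Type} [Steiner M]

/-- Membership in the subquasigroup generated by `A`. -/
inductive mem_closure (A : Set M) : M → Prop
  | base {a : M} : a ∈ A → mem_closure A a
  | mul {a b : M} : mem_closure A a → mem_closure A b → mem_closure A (a * b)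

/-- The subquasigroup generated by `A`. -/
def closure (A : Set M) : Set M := {x | mem_closure A x}

instance (A : Set M) : Steiner (closure A) where
  mul a b := ⟨a.1 * b.1, a.2.mul b.2⟩
  comm a b := Subtype.ext (Steiner.comm a.1 b.1)
  idem a := Subtype.ext (Steiner.idem a.1)
  lcancel a b := Subtype.ext (Steiner.lcancel a.1 b.1)

/-- `A` is independent: the generated subquasigroup has the universal mapping
property over `A` with respect to the class of Steiner quasigroups. -/
def Independent (A : Set M) : Prop :=
  ∀ (N : Type) [Steiner N] (f : A → N),
    ∃ g : closure A →ₙ* N, ∀ a : A, g ⟨a.1, mem_closure.base a.2⟩ = f a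

/-- A tuple is independent if its entries are pairwise distinct and its
range is an independent set. -/
def IndepTuple {ι : Type} (a : ι → M) : Prop :=
  Function.Injective a ∧ Independent (Set.range a)

/-- `A` is a free base of `M`: it generates `M` and `M` has the universal
mapping property over `A`. -/
def FreeBase (A : Set M) : Prop :=
  closure A = Set.univ ∧
  ∀ (N : Type) [Steiner N] (f : A → N),
    ∃ g : M →ₙ* N, ∀ a : A, g a.1 = f a

/-- Terms in the language with one binary operation. -/
inductive Term (α : Type) where
  | var : α → Term α
  | mul : Term α → Term α → Term α

/-- Evaluation of a term at an assignment. -/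
def Term.eval {α : Type} (e : α → M) : Term α → M
  | .var x => e x
  | .mul t s => t.eval e * s.eval e

/-- Equivalence of terms generated by applications of commutativity to subterms. -/
inductive TEquiv {α : Type} : Term α → Term α → Prop
  | refl (t : Term α) : TEquiv t t
  | symm {t s : Term α} : TEquiv t s → TEquiv s t
  | trans {t s u : Term α} : TEquiv t s → TEquiv s u → TEquiv t u
  | comm (t s : Term α) : TEquiv (.mul t s) (.mul s t)
  | congr {t t' s s' : Term α} : TEquiv t t' → TEquiv s s' →
      TEquiv (.mul t s) (.mul t' s')

/-- The subterm relation. -/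
inductive Subterm {α : Type} : Term α → Term α → Prop
  | refl (t : Term α) : Subterm t t
  | left {s t r : Term α} : Subterm s t → Subterm s (.mul t r)
  | right {s t r : Term α} : Subterm s t → Subterm s (.mul r t)

/-- A term is reduced if it contains no subterm of the forms `t₁·t₂` with
`t₁ ∼ t₂`, `t₁·(t₂·t₃)` with `t₁ ∼ t₂` or `t₁ ∼ t₃`, or `(t₁·t₂)·t₃` with
`t₁ ∼ t₃` or `t₂ ∼ t₃`. -/
def Reduced {α : Type} (t : Term α) : Prop :=
  (∀ t1 t2 : Term α, Subterm (.mul t1 t2) t → ¬ TEquiv t1 t2) ∧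
  (∀ t1 t2 t3 : Term α, Subterm (.mul t1 (.mul t2 t3)) t →
      ¬ TEquiv t1 t2 ∧ ¬ TEquiv t1 t3) ∧
  (∀ t1 t2 t3 : Term α, Subterm (.mul (.mul t1 t2) t3) t →
      ¬ TEquiv t1 t3 ∧ ¬ TEquiv t2 t3)

/-- The rank of a term. -/
def Term.rank {α : Type} : Term α → ℕ
  | .var _ => 0
  | .mul t s => max t.rank s.rank + 1

/-- Number of occurrences of a variable in a term. -/
def Term.occ {α : Type} [DecidableEq α] (x : α) : Term α → ℕ
  | .var y => if y = x then 1 else 0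
  | .mul t s => t.occ x + s.occ x

/-- The variable `x` occurs in the term. -/
inductive Occurs {α : Type} (x : α) : Term α → Prop
  | var : Occurs x (.var x)
  | left {t s : Term α} : Occurs x t → Occurs x (.mul t s)
  | right {t s : Term α} : Occurs x s → Occurs x (.mul t s)

/-- The levels of `M` over `A`. -/
def level (A : Set M) : ℕ → Set M
  | 0 => A
  | n + 1 => {z | ∃ a ∈ level A n, ∃ b ∈ level A n, z = a * b}

/-- `S` is a standard free construction over `A`. -/
def StdFree (A : Set M) (S : ℕ → Set M) : Prop :=
  S 0 = A ∧
  (∀ n, S (n + 1) = {z | ∃ a ∈ S n, ∃ b ∈ S n, z = a * b}) ∧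
  (∀ a ∈ S 0, ∀ b ∈ S 0, a ≠ b → a * b ∉ S 0) ∧
  (∀ n, ∀ a ∈ S (n + 1), a ∉ S n → ∀ b ∈ S (n + 1), b ∉ S n → a ≠ b →
    a * b ∉ S (n + 1)) ∧
  (∀ n, ∀ a ∈ S (n + 1), a ∉ S n → ∃ b ∈ S n, ∃ c ∈ S n, b ≠ c ∧ a = b * c ∧
    ∀ b' ∈ S n, ∀ c' ∈ S n, b' ≠ c' → a = b' * c' → ({b', c'} : Set M) = {b, c})

theorem eval_mem_closure {α : Type} {A : Set M} (e : α → M) (h : ∀ x, e x ∈ A) :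
    ∀ t : Term α, t.eval e ∈ closure A
  | .var x => mem_closure.base (h x)
  | .mul t s => mem_closure.mul (eval_mem_closure e h t) (eval_mem_closure e h s)

end Steiner

section St8Aux
open Steiner
open scoped Classical

namespace St8

variable {α : Type}

/-- Number of leaves of a term. -/
def wt : Steiner.Term α → ℕ
  | .var _ => 1
  | .mul t s => wt t + wt s

lemma wt_pos : ∀ t : Steiner.Term α, 0 < wt t
  | .var _ => Nat.one_pos
  | .mul t s => Nat.add_pos_left (wt_pos t) _

lemma wt_lt_left {t u v : Steiner.Term α} (h : t = .mul u v) : wt u < wt t := by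
  subst h; have := wt_pos v; simp [wt]; omega

lemma wt_lt_right {t u v : Steiner.Term α} (h : t = .mul u v) : wt v < wt t := by
  subst h; have := wt_pos u; simp [wt]; omega

/-- Canonically oriented product of two terms. -/
noncomputable def cmul (t s : Steiner.Term α) : Steiner.Term α :=
  if WellOrderingRel t s then .mul t s else .mul s t

lemma not_wor_of_wor {t s : Steiner.Term α} (h : WellOrderingRel t s) :
    ¬ WellOrderingRel s t := by
  intro h'
  exact irrefl_of WellOrderingRel t (trans_of WellOrderingRel h h')

lemma wor_total {t s : Steiner.Term α} (h : t ≠ s) :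
    WellOrderingRel t s ∨ WellOrderingRel s t := by
  rcases trichotomous_of WellOrderingRel t s with h1 | h1 | h1
  · exact Or.inl h1
  · exact absurd h1 h
  · exact Or.inr h1

lemma cmul_comm {t s : Steiner.Term α} (h : t ≠ s) : cmul t s = cmul s t := by
  rcases wor_total h with h1 | h1
  · rw [cmul, cmul, if_pos h1, if_neg (not_wor_of_wor h1)]
  · rw [cmul, cmul, if_neg (not_wor_of_wor h1), if_pos h1]

lemma cmul_cases (t s : Steiner.Term α) : cmul t s = .mul t s ∨ cmul t s = .mul s t := by
  rw [cmul]; split <;> [exact Or.inl rfl; exact Or.inr rfl]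

/-- Normal (reduced, canonically oriented) terms. -/
inductive Norm : Steiner.Term α → Prop
  | var (x : α) : Norm (.var x)
  | mul {u v : Steiner.Term α} : Norm u → Norm v → u ≠ v → WellOrderingRel u v →
      (∀ a b, u = .mul a b → a ≠ v ∧ b ≠ v) →
      (∀ a b, v = .mul a b → a ≠ u ∧ b ≠ u) → Norm (.mul u v)

/-- The product operation on normal terms. -/
noncomputable def m (t s : Steiner.Term α) : Steiner.Term α :=
  if t = s then t
  else if h : ∃ v, s = .mul t v then h.choose
  else if h : ∃ u, s = .mul u t then h.choose
  else if h : ∃ v, t = .mul s v then h.choose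
  else if h : ∃ u, t = .mul u s then h.choose
  else cmul t s

lemma m_self (t : Steiner.Term α) : m t t = t := by simp [m]

lemma m_left {t v s : Steiner.Term α} (hs : s = .mul t v) : m t s = v := by
  have h1 : t ≠ s := by
    intro h; rw [← h] at hs; exact absurd (wt_lt_left hs) (lt_irrefl _)
  have h2 : ∃ v', s = .mul t v' := ⟨v, hs⟩
  rw [m, if_neg h1, dif_pos h2]
  have h' := hs.symm.trans h2.choose_spec
  injection h' with _ h
  exact h.symm

lemma m_right {t u s : Steiner.Term α} (hs : s = .mul u t) (hut : u ≠ t) : m t s = u := by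
  have h1 : t ≠ s := by
    intro h; rw [← h] at hs; exact absurd (wt_lt_right hs) (lt_irrefl _)
  have h2 : ¬ ∃ v', s = .mul t v' := by
    rintro ⟨v', hv'⟩; injection hs.symm.trans hv' with h _; exact hut h
  have h3 : ∃ u', s = .mul u' t := ⟨u, hs⟩
  rw [m, if_neg h1, dif_neg h2, dif_pos h3]
  have h' := hs.symm.trans h3.choose_spec
  injection h' with h _
  exact h.symm

lemma m_left' {t v s : Steiner.Term α} (ht : t = .mul s v) : m t s = v := by
  have hst : wt s < wt t := wt_lt_left ht
  have h1 : t ≠ s := by intro h; rw [h] at hst; exact lt_irrefl _ hst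
  have h2 : ¬ ∃ v', s = .mul t v' := by
    rintro ⟨v', hv'⟩; exact absurd (lt_trans hst (wt_lt_left hv')) (lt_irrefl _)
  have h3 : ¬ ∃ u', s = .mul u' t := by
    rintro ⟨u', hu'⟩; exact absurd (lt_trans hst (wt_lt_right hu')) (lt_irrefl _)
  have h4 : ∃ v', t = .mul s v' := ⟨v, ht⟩
  rw [m, if_neg h1, dif_neg h2, dif_neg h3, dif_pos h4]
  have h' := ht.symm.trans h4.choose_spec
  injection h' with _ h
  exact h.symm

lemma m_right' {t u s : Steiner.Term α} (ht : t = .mul u s) (hus : u ≠ s) : m t s = u := by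
  have hst : wt s < wt t := wt_lt_right ht
  have h1 : t ≠ s := by intro h; rw [h] at hst; exact lt_irrefl _ hst
  have h2 : ¬ ∃ v', s = .mul t v' := by
    rintro ⟨v', hv'⟩; exact absurd (lt_trans hst (wt_lt_left hv')) (lt_irrefl _)
  have h3 : ¬ ∃ u', s = .mul u' t := by
    rintro ⟨u', hu'⟩; exact absurd (lt_trans hst (wt_lt_right hu')) (lt_irrefl _)
  have h4 : ¬ ∃ v', t = .mul s v' := by
    rintro ⟨v', hv'⟩; injection ht.symm.trans hv' with h _; exact hus h
  have h5 : ∃ u', t = .mul u' s := ⟨u, ht⟩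
  rw [m, if_neg h1, dif_neg h2, dif_neg h3, dif_neg h4, dif_pos h5]
  have h' := ht.symm.trans h5.choose_spec
  injection h' with h _
  exact h.symm

lemma m_none {t s : Steiner.Term α} (h1 : t ≠ s) (h2 : ∀ v, s ≠ .mul t v)
    (h3 : ∀ u, s ≠ .mul u t) (h4 : ∀ v, t ≠ .mul s v) (h5 : ∀ u, t ≠ .mul u s) :
    m t s = cmul t s := by
  rw [m, if_neg h1, dif_neg (by rintro ⟨v, hv⟩; exact h2 v hv),
    dif_neg (by rintro ⟨u, hu⟩; exact h3 u hu),
    dif_neg (by rintro ⟨v, hv⟩; exact h4 v hv),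
    dif_neg (by rintro ⟨u, hu⟩; exact h5 u hu)]

end St8
end St8Aux
section St8Aux2
open Steiner
namespace St8

variable {α : Type}

lemma m_comm (t s : Steiner.Term α) : m t s = m s t := by
  by_cases h1 : t = s
  · subst h1; rfl
  by_cases h2 : ∃ v, s = .mul t v
  · obtain ⟨v, hv⟩ := h2
    rw [m_left hv, m_left' hv]
  by_cases h3 : ∃ u, s = .mul u t
  · obtain ⟨u, hu⟩ := h3
    have hut : u ≠ t := fun h => h2 ⟨t, by rw [hu, h]⟩
    rw [m_right hu hut, m_right' hu hut]
  by_cases h4 : ∃ v, t = .mul s v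
  · obtain ⟨v, hv⟩ := h4
    rw [m_left' hv, m_left hv]
  by_cases h5 : ∃ u, t = .mul u s
  · obtain ⟨u, hu⟩ := h5
    have hus : u ≠ s := fun h => h4 ⟨s, by rw [hu, h]⟩
    rw [m_right' hu hus, m_right hu hus]
  · rw [m_none h1 (fun v hv => h2 ⟨v, hv⟩) (fun u hu => h3 ⟨u, hu⟩)
        (fun v hv => h4 ⟨v, hv⟩) (fun u hu => h5 ⟨u, hu⟩),
      m_none (Ne.symm h1) (fun v hv => h4 ⟨v, hv⟩) (fun u hu => h5 ⟨u, hu⟩)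
        (fun v hv => h2 ⟨v, hv⟩) (fun u hu => h3 ⟨u, hu⟩),
      cmul_comm h1]

lemma m_norm {t s : Steiner.Term α} (ht : Norm t) (hs : Norm s) : Norm (m t s) := by
  by_cases h1 : t = s
  · subst h1; rw [m_self]; exact ht
  by_cases h2 : ∃ v, s = .mul t v
  · obtain ⟨v, hv⟩ := h2; subst hv
    rw [m_left rfl]
    cases hs with | mul a b c d e f => exact b
  by_cases h3 : ∃ u, s = .mul u t
  · obtain ⟨u, hu⟩ := h3; subst hu
    have hut : u ≠ t := fun h => h2 ⟨t, by rw [h]⟩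
    rw [m_right rfl hut]
    cases hs with | mul a b c d e f => exact a
  by_cases h4 : ∃ v, t = .mul s v
  · obtain ⟨v, hv⟩ := h4; subst hv
    rw [m_left' rfl]
    cases ht with | mul a b c d e f => exact b
  by_cases h5 : ∃ u, t = .mul u s
  · obtain ⟨u, hu⟩ := h5; subst hu
    have hus : u ≠ s := fun h => h4 ⟨s, by rw [h]⟩
    rw [m_right' rfl hus]
    cases ht with | mul a b c d e f => exact a
  · rw [m_none h1 (fun v hv => h2 ⟨v, hv⟩) (fun u hu => h3 ⟨u, hu⟩)
        (fun v hv => h4 ⟨v, hv⟩) (fun u hu => h5 ⟨u, hu⟩)]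
    have c2 : ∀ a b, t = .mul a b → a ≠ s ∧ b ≠ s := by
      intro a b hab
      constructor
      · intro h; subst h; exact h4 ⟨b, hab⟩
      · intro h; subst h; exact h5 ⟨a, hab⟩
    have c3 : ∀ a b, s = .mul a b → a ≠ t ∧ b ≠ t := by
      intro a b hab
      constructor
      · intro h; subst h; exact h2 ⟨b, hab⟩
      · intro h; subst h; exact h3 ⟨a, hab⟩
    rcases wor_total h1 with hR | hR
    · rw [cmul, if_pos hR]; exact Norm.mul ht hs h1 hR c2 c3
    · rw [cmul, if_neg (not_wor_of_wor hR)]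
      exact Norm.mul hs ht (Ne.symm h1) hR c3 c2

lemma m_lcancel {t s : Steiner.Term α} (ht : Norm t) (hs : Norm s) : m t (m t s) = s := by
  by_cases h1 : t = s
  · subst h1; rw [m_self, m_self]
  by_cases h2 : ∃ v, s = .mul t v
  · obtain ⟨v, hv⟩ := h2; subst hv
    rw [m_left rfl]
    cases hs with
    | mul n1 n2 n3 n4 n5 n6 =>
      rw [m_none n3 (fun w hw => (n6 _ _ hw).1 rfl) (fun w hw => (n6 _ _ hw).2 rfl)
            (fun w hw => (n5 _ _ hw).1 rfl) (fun w hw => (n5 _ _ hw).2 rfl),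
        cmul, if_pos n4]
  by_cases h3 : ∃ u, s = .mul u t
  · obtain ⟨u, hu⟩ := h3; subst hu
    cases hs with
    | mul n1 n2 n3 n4 n5 n6 =>
      rw [m_right rfl n3,
        m_none (Ne.symm n3) (fun w hw => (n5 _ _ hw).1 rfl) (fun w hw => (n5 _ _ hw).2 rfl)
          (fun w hw => (n6 _ _ hw).1 rfl) (fun w hw => (n6 _ _ hw).2 rfl),
        cmul, if_neg (not_wor_of_wor n4)]
  by_cases h4 : ∃ v, t = .mul s v
  · obtain ⟨v, hv⟩ := h4; subst hv
    rw [m_left' rfl]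
    cases ht with
    | mul n1 n2 n3 n4 n5 n6 => exact m_right' rfl n3
  by_cases h5 : ∃ u, t = .mul u s
  · obtain ⟨u, hu⟩ := h5; subst hu
    cases ht with
    | mul n1 n2 n3 n4 n5 n6 =>
      rw [m_right' rfl n3]
      exact m_left' rfl
  · rw [m_none h1 (fun v hv => h2 ⟨v, hv⟩) (fun u hu => h3 ⟨u, hu⟩)
        (fun v hv => h4 ⟨v, hv⟩) (fun u hu => h5 ⟨u, hu⟩)]
    rcases wor_total h1 with hR | hR
    · rw [cmul, if_pos hR]; exact m_left rfl
    · rw [cmul, if_neg (not_wor_of_wor hR)]; exact m_right rfl (Ne.symm h1)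

lemma m_eval {Q : Type} [Steiner Q] (e : α → Q) (t s : Steiner.Term α) :
    (m t s).eval e = t.eval e * s.eval e := by
  by_cases h1 : t = s
  · subst h1; rw [m_self, Steiner.idem]
  by_cases h2 : ∃ v, s = .mul t v
  · obtain ⟨v, hv⟩ := h2; subst hv
    rw [m_left rfl]
    show Steiner.Term.eval e v = Steiner.Term.eval e t *
      (Steiner.Term.eval e t * Steiner.Term.eval e v)
    rw [Steiner.lcancel]
  by_cases h3 : ∃ u, s = .mul u t
  · obtain ⟨u, hu⟩ := h3; subst hu
    have hut : u ≠ t := fun h => h2 ⟨t, by rw [h]⟩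
    rw [m_right rfl hut]
    show Steiner.Term.eval e u = Steiner.Term.eval e t *
      (Steiner.Term.eval e u * Steiner.Term.eval e t)
    rw [Steiner.comm (Steiner.Term.eval e u), Steiner.lcancel]
  by_cases h4 : ∃ v, t = .mul s v
  · obtain ⟨v, hv⟩ := h4; subst hv
    rw [m_left' rfl]
    show Steiner.Term.eval e v = (Steiner.Term.eval e s * Steiner.Term.eval e v) *
      Steiner.Term.eval e s
    rw [Steiner.comm _ (Steiner.Term.eval e s), Steiner.lcancel]
  by_cases h5 : ∃ u, t = .mul u s
  · obtain ⟨u, hu⟩ := h5; subst hu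
    have hus : u ≠ s := fun h => h4 ⟨s, by rw [h]⟩
    rw [m_right' rfl hus]
    show Steiner.Term.eval e u = (Steiner.Term.eval e u * Steiner.Term.eval e s) *
      Steiner.Term.eval e s
    rw [Steiner.comm _ (Steiner.Term.eval e s),
      Steiner.comm (Steiner.Term.eval e u), Steiner.lcancel]
  · rw [m_none h1 (fun v hv => h2 ⟨v, hv⟩) (fun u hu => h3 ⟨u, hu⟩)
        (fun v hv => h4 ⟨v, hv⟩) (fun u hu => h5 ⟨u, hu⟩)]
    rcases cmul_cases t s with h | h <;> rw [h]
    · rfl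
    · exact Steiner.comm _ _

lemma m_top {t s : Steiner.Term α} (h1 : t ≠ s) (hwt : wt t ≤ wt (m t s))
    (hws : wt s ≤ wt (m t s)) : m t s = .mul t s ∨ m t s = .mul s t := by
  by_cases h2 : ∃ v, s = .mul t v
  · obtain ⟨v, hv⟩ := h2
    rw [m_left hv] at hws
    exact absurd (wt_lt_right hv) (not_lt.mpr hws)
  by_cases h3 : ∃ u, s = .mul u t
  · obtain ⟨u, hu⟩ := h3
    have hut : u ≠ t := fun h => h2 ⟨t, by rw [hu, h]⟩
    rw [m_right hu hut] at hws
    exact absurd (wt_lt_left hu) (not_lt.mpr hws)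
  by_cases h4 : ∃ v, t = .mul s v
  · obtain ⟨v, hv⟩ := h4
    rw [m_left' hv] at hwt
    exact absurd (wt_lt_right hv) (not_lt.mpr hwt)
  by_cases h5 : ∃ u, t = .mul u s
  · obtain ⟨u, hu⟩ := h5
    have hus : u ≠ s := fun h => h4 ⟨s, by rw [hu, h]⟩
    rw [m_right' hu hus] at hwt
    exact absurd (wt_lt_left hu) (not_lt.mpr hwt)
  · rw [m_none h1 (fun v hv => h2 ⟨v, hv⟩) (fun u hu => h3 ⟨u, hu⟩)
        (fun v hv => h4 ⟨v, hv⟩) (fun u hu => h5 ⟨u, hu⟩)]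
    exact cmul_cases t s

end St8
end St8Aux2
section St8Aux3
open Steiner
namespace St8

variable {α : Type}

/-- The type of normal terms: a concrete free Steiner quasigroup. -/
def NT (α : Type) : Type := {t : Steiner.Term α // Norm t}

noncomputable instance : Steiner (NT α) where
  mul a b := ⟨m a.1 b.1, m_norm a.2 b.2⟩
  comm a b := Subtype.ext (m_comm a.1 b.1)
  idem a := Subtype.ext (m_self a.1)
  lcancel a b := Subtype.ext (m_lcancel a.2 b.2)

lemma NT_mul_val (a b : NT α) : (a * b).1 = m a.1 b.1 := rfl

/-- The order on normal terms: by weight, then by a well-ordering. -/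
def ltN (a b : NT α) : Prop :=
  wt a.1 < wt b.1 ∨ (wt a.1 = wt b.1 ∧ WellOrderingRel a b)

lemma ltN_wf : WellFounded (ltN (α := α)) := by
  have h : WellFounded (InvImage (Prod.Lex Nat.lt (WellOrderingRel (α := NT α)))
      (fun a => (wt a.1, a))) :=
    InvImage.wf _ (WellFounded.prod_lex (Nat.lt_wfRel.wf)
      (IsWellFounded.wf (r := WellOrderingRel (α := NT α))))
  refine Subrelation.wf ?_ h
  intro a b hab
  rcases hab with h1 | ⟨h1, h2⟩
  · exact Prod.Lex.left _ _ h1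
  · show Prod.Lex Nat.lt WellOrderingRel (wt a.1, a) (wt b.1, b)
    rw [h1]
    exact Prod.Lex.right _ h2

lemma ltN_trans {a b c : NT α} (h1 : ltN a b) (h2 : ltN b c) : ltN a c := by
  rcases h1 with h1 | ⟨h1, h1'⟩ <;> rcases h2 with h2 | ⟨h2, h2'⟩
  · exact Or.inl (h1.trans h2)
  · exact Or.inl (h2 ▸ h1)
  · exact Or.inl (h1 ▸ h2)
  · exact Or.inr ⟨h1.trans h2, trans_of WellOrderingRel h1' h2'⟩

lemma ltN_total (a b : NT α) (h : a ≠ b) : ltN a b ∨ ltN b a := by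
  rcases Nat.lt_trichotomy (wt a.1) (wt b.1) with h1 | h1 | h1
  · exact Or.inl (Or.inl h1)
  · rcases trichotomous_of WellOrderingRel a b with h2 | h2 | h2
    · exact Or.inl (Or.inr ⟨h1, h2⟩)
    · exact absurd h2 h
    · exact Or.inr (Or.inr ⟨h1.symm, h2⟩)
  · exact Or.inr (Or.inl h1)

lemma ltN_wt_le {a b : NT α} (h : ltN a b) : wt a.1 ≤ wt b.1 := by
  rcases h with h | ⟨h, _⟩
  · exact h.le
  · exact h.le

/-- If `z = x * y` with `x, y` below `z`, then `z` is literally the (oriented)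
product term of `x` and `y`. -/
lemma NT_top {x y z : NT α} (hx : ltN x z) (hy : ltN y z) (hxy : x ≠ y)
    (hz : z = x * y) : z.1 = .mul x.1 y.1 ∨ z.1 = .mul y.1 x.1 := by
  have hxy1 : x.1 ≠ y.1 := fun h => hxy (Subtype.ext h)
  have hzv : z.1 = m x.1 y.1 := by rw [hz]; rfl
  have h1 : wt x.1 ≤ wt (m x.1 y.1) := hzv ▸ ltN_wt_le hx
  have h2 : wt y.1 ≤ wt (m x.1 y.1) := hzv ▸ ltN_wt_le hy
  rw [hzv]
  exact m_top hxy1 h1 h2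

/-- Uniqueness of factorizations into smaller elements, in `NT α`. -/
lemma NT_uniq (z x y x' y' : NT α) (hx : ltN x z) (hy : ltN y z) (hxy : x ≠ y)
    (hz : z = x * y) (hx' : ltN x' z) (hy' : ltN y' z) (hxy' : x' ≠ y')
    (hz' : z = x' * y') : (x = x' ∧ y = y') ∨ (x = y' ∧ y = x') := by
  rcases NT_top hx hy hxy hz with h | h <;> rcases NT_top hx' hy' hxy' hz' with h' | h' <;>
      rw [h] at h'
  · injection h' with a b; exact Or.inl ⟨Subtype.ext a, Subtype.ext b⟩
  · injection h' with a b; exact Or.inr ⟨Subtype.ext a, Subtype.ext b⟩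
  · injection h' with a b; exact Or.inr ⟨Subtype.ext b, Subtype.ext a⟩
  · injection h' with a b; exact Or.inl ⟨Subtype.ext b, Subtype.ext a⟩

/-- A hyperfree well-ordering of a Steiner quasigroup. -/
structure Hyper {Q : Type} [Steiner Q] (lt : Q → Q → Prop) : Prop where
  wf : WellFounded lt
  htrans : ∀ {a b c : Q}, lt a b → lt b c → lt a c
  total : ∀ a b : Q, a ≠ b → lt a b ∨ lt b a
  uniq : ∀ z x y x' y' : Q, lt x z → lt y z → x ≠ y → z = x * y →
      lt x' z → lt y' z → x' ≠ y' → z = x' * y' →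
      (x = x' ∧ y = y') ∨ (x = y' ∧ y = x')

lemma hyper_ltN : Hyper (ltN (α := α)) :=
  ⟨ltN_wf, ltN_trans, ltN_total, NT_uniq⟩

/-- Pull back a hyperfree ordering along an injective homomorphism. -/
lemma Hyper.pull {Q Q' : Type} [Steiner Q] [Steiner Q'] (φ : Q →ₙ* Q')
    (hinj : Function.Injective φ) {lt' : Q' → Q' → Prop} (h : Hyper lt') :
    Hyper (fun a b : Q => lt' (φ a) (φ b)) := by
  constructor
  · exact InvImage.wf φ h.wf
  · exact fun h1 h2 => h.htrans h1 h2
  · exact fun a b hab => h.total _ _ (fun e => hab (hinj e))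
  · intro z x y x' y' hx hy hxy hz hx' hy' hxy' hz'
    have e1 : φ z = φ x * φ y := by rw [hz, map_mul]
    have e2 : φ z = φ x' * φ y' := by rw [hz', map_mul]
    rcases h.uniq (φ z) (φ x) (φ y) (φ x') (φ y') hx hy (fun e => hxy (hinj e)) e1
        hx' hy' (fun e => hxy' (hinj e)) e2 with ⟨a, b⟩ | ⟨a, b⟩
    · exact Or.inl ⟨hinj a, hinj b⟩
    · exact Or.inr ⟨hinj a, hinj b⟩

end St8
end St8Aux3
section St8Aux4
open Steiner
open scoped Classical
namespace St8

variable {Q : Type} [Steiner Q] {lt : Q → Q → Prop}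

/-- `x` is a product of two distinct smaller elements. -/
def PP (lt : Q → Q → Prop) (x : Q) : Prop :=
  ∃ u v, lt u x ∧ lt v x ∧ u ≠ v ∧ x = u * v

lemma mul_ne_left {x y : Q} (h : x ≠ y) : x * y ≠ x := by
  intro e
  have h2 : x * (x * y) = x * x := by rw [e]
  rw [Steiner.lcancel, Steiner.idem] at h2
  exact h h2.symm

lemma mul_ne_right {x y : Q} (h : x ≠ y) : x * y ≠ y := by
  intro e
  rw [Steiner.comm] at e
  have h2 : y * (y * x) = y * y := by rw [e]
  rw [Steiner.lcancel, Steiner.idem] at h2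
  exact h h2

lemma steiner_aux {N : Type} [Steiner N] (a b : N) : (b * a) * b = a := by
  rw [Steiner.comm, Steiner.lcancel]

noncomputable def gfun (h : Hyper lt) {N : Type} [Steiner N]
    (f : {x : Q | ¬ PP lt x} → N) : Q → N :=
  h.wf.fix (fun x IH =>
    if hx : PP lt x then
      IH hx.choose hx.choose_spec.choose_spec.1 *
      IH hx.choose_spec.choose hx.choose_spec.choose_spec.2.1
    else f ⟨x, hx⟩)

lemma gfun_pp (h : Hyper lt) {N : Type} [Steiner N] (f : {x : Q | ¬ PP lt x} → N)
    {x u v : Q} (hu : lt u x) (hv : lt v x) (huv : u ≠ v) (hx : x = u * v) :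
    gfun h f x = gfun h f u * gfun h f v := by
  have hpp : PP lt x := ⟨u, v, hu, hv, huv, hx⟩
  rw [gfun, WellFounded.fix_eq, dif_pos hpp]
  show gfun h f hpp.choose * gfun h f hpp.choose_spec.choose =
    gfun h f u * gfun h f v
  obtain ⟨e1, e2⟩ | ⟨e1, e2⟩ := h.uniq x hpp.choose hpp.choose_spec.choose u v
      hpp.choose_spec.choose_spec.1 hpp.choose_spec.choose_spec.2.1
      hpp.choose_spec.choose_spec.2.2.1 hpp.choose_spec.choose_spec.2.2.2
      hu hv huv hx
  · rw [← e1, ← e2]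
  · rw [Steiner.comm (gfun h f u), ← e1, ← e2]

lemma gfun_base (h : Hyper lt) {N : Type} [Steiner N] (f : {x : Q | ¬ PP lt x} → N)
    {x : Q} (hx : ¬ PP lt x) : gfun h f x = f ⟨x, hx⟩ := by
  rw [gfun, WellFounded.fix_eq, dif_neg hx]

lemma gfun_mul (h : Hyper lt) {N : Type} [Steiner N] (f : {x : Q | ¬ PP lt x} → N)
    (x y : Q) : gfun h f (x * y) = gfun h f x * gfun h f y := by
  by_cases hxy : x = y
  · subst hxy; rw [Steiner.idem, Steiner.idem]
  have hzx : x * y ≠ x := mul_ne_left hxy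
  have hzy : x * y ≠ y := mul_ne_right hxy
  have ey : y = x * (x * y) := (Steiner.lcancel x y).symm
  have ex : x = y * (x * y) := by rw [Steiner.comm x y, Steiner.lcancel]
  rcases h.total x (x * y) (Ne.symm hzx) with h1 | h1 <;>
    rcases h.total y (x * y) (Ne.symm hzy) with h2 | h2
  · exact gfun_pp h f h1 h2 hxy rfl
  · have e := gfun_pp h f (h.htrans h1 h2) h2 (Ne.symm hzx) ey
    rw [e, Steiner.lcancel]
  · have e := gfun_pp h f (h.htrans h2 h1) h1 (Ne.symm hzy) ex
    rw [e, steiner_aux]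
  · rcases h.total x y hxy with h3 | h3
    · have e := gfun_pp h f h3 h2 (Ne.symm hzx) ey
      rw [e, Steiner.lcancel]
    · have e := gfun_pp h f h3 h1 (Ne.symm hzy) ex
      rw [e, steiner_aux]

/-- A Steiner quasigroup with a hyperfree well-ordering has a free base:
the set of elements which are not products of two distinct smaller elements. -/
theorem hyper_freeBase (h : Hyper lt) : FreeBase {x : Q | ¬ PP lt x} := by
  constructor
  · apply Set.eq_univ_of_forall
    intro x
    refine h.wf.induction (C := fun z => z ∈ closure {x : Q | ¬ PP lt x}) x ?_
    intro y IH
    by_cases hy : PP lt y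
    · obtain ⟨u, v, hu, hv, huv, he⟩ := hy
      show mem_closure _ y
      rw [he]
      exact mem_closure.mul (IH u hu) (IH v hv)
    · exact mem_closure.base hy
  · intro N _ f
    refine ⟨⟨gfun h f, gfun_mul h f⟩, ?_⟩
    intro a
    show gfun h f a.1 = f a
    rw [gfun_base h f a.2]

end St8
end St8Aux4
open Steiner
/-- Every subquasigroup of a free Steiner quasigroup is free. -/
theorem stmt8 {M : Type} [Steiner M] (hM : ∃ A : Set M, FreeBase A)
    (T : Set M) :
    ∃ B : Set (closure T), FreeBase B := by
  classical
  obtain ⟨A, hA1, hA2⟩ := hM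
  -- a homomorphism from `M` to the concrete free Steiner quasigroup of terms
  obtain ⟨φ, hφ⟩ := hA2 (St8.NT ↥A) (fun a => ⟨.var a, St8.Norm.var a⟩)
  -- the evaluation homomorphism back to `M`
  let ψ : St8.NT ↥A →ₙ* M :=
    ⟨fun t => t.1.eval Subtype.val, fun a b => St8.m_eval Subtype.val a.1 b.1⟩
  have hretr : ∀ x : M, ψ (φ x) = x := by
    intro x
    have hx : mem_closure A x := by
      have hx' : x ∈ closure A := by rw [hA1]; trivial
      exact hx'
    induction hx with
    | base ha =>
      rw [hφ ⟨_, ha⟩]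
      rfl
    | mul ha hb iha ihb => rw [map_mul, map_mul, iha, ihb]
  have hinj : Function.Injective φ := by
    intro a b hab
    rw [← hretr a, ← hretr b, hab]
  have hypM : St8.Hyper (fun a b : M => St8.ltN (φ a) (φ b)) :=
    St8.Hyper.pull φ hinj St8.hyper_ltN
  let ι : closure T →ₙ* M := ⟨Subtype.val, fun a b => rfl⟩
  have hypS : St8.Hyper (fun a b : closure T => St8.ltN (φ (ι a)) (φ (ι b))) :=
    St8.Hyper.pull ι Subtype.val_injective hypM
  exact ⟨_, St8.hyper_freeBase hypS⟩
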